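/- For all real λ > 0 and integers n, t ≥ 1, the truncated Chebyshev/Taylor approximation error of the exponential satisfies: sup_{y∈[-1,1]} |e^{-λ(y+1)} - e^{-λ}∑_{j=0}^{t} ((-λ)^j/j!)·p_j(y)| ≤ 2e^{-n²/(2t)} + e^{-λ-t}, provided λe² ≤ t, where p_j is a degree-≤n polynomial approximating y^j with sup_{y∈[-1,1]}|y^j - p_j(y)| ≤ 2e^{-n²/(2j)} ≤ 2e^{-n²/(2t)} for j ≤ t, and the coefficient sum bound e^{-λ}∑_{j=0}^{t} λ^j/j! ≤ 1 is used. -/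

import Mathlib

open Real Polynomial

lemma term_bound (l : ℝ) (hl : 0 < l) (t : ℕ) (hlt : l * Real.exp 1 ^ 2 ≤ t)
    (k : ℕ) (hk : t < k) : l ^ k / Nat.factorial k ≤ Real.exp (-1) ^ k := by
  have hk0 : 0 < k := lt_of_le_of_lt (Nat.zero_le t) hk
  have hkR : (0:ℝ) < k := by exact_mod_cast hk0
  have h1 : (k:ℝ) ^ k / Nat.factorial k ≤ Real.exp k :=
    Real.pow_div_factorial_le_exp _ hkR.le k
  have hfac : (0:ℝ) < Nat.factorial k := by exact_mod_cast (Nat.factorial_pos k)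
  have h2 : (1:ℝ) / Nat.factorial k ≤ Real.exp k / (k:ℝ)^k := by
    rw [div_le_div_iff₀ hfac (pow_pos hkR k)] at *
    calc (1:ℝ) * (k:ℝ)^k = (k:ℝ)^k := one_mul _
    _ ≤ Real.exp k * Nat.factorial k := by
        rw [div_le_iff₀ hfac] at h1; linarith
  have key : l ^ k / Nat.factorial k ≤ (l * Real.exp 1 / k) ^ k := by
    rw [div_pow, mul_pow, ← Real.exp_nat_mul, mul_one]
    calc l ^ k / Nat.factorial k = l ^ k * (1 / Nat.factorial k) := by ring
    _ ≤ l ^ k * (Real.exp k / (k:ℝ)^k) := by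
        exact mul_le_mul_of_nonneg_left h2 (pow_nonneg hl.le k)
    _ = l ^ k * Real.exp k / (k:ℝ)^k := by ring
  refine key.trans (pow_le_pow_left₀ (by positivity) ?_ k)
  rw [div_le_iff₀ hkR]
  have he : (0:ℝ) < Real.exp 1 := Real.exp_pos 1
  have : l * Real.exp 1 ^ 2 ≤ k := hlt.trans (by exact_mod_cast hk.le)
  have hcan : Real.exp 1 ^ 2 * Real.exp (-1) = Real.exp 1 := by
    rw [Real.exp_neg, pow_two, mul_assoc, mul_inv_cancel₀ (Real.exp_ne_zero 1), mul_one]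
  calc l * Real.exp 1 = l * Real.exp 1 ^ 2 * Real.exp (-1) := by
        rw [mul_assoc, hcan]
  _ ≤ (k:ℝ) * Real.exp (-1) := by
        exact mul_le_mul_of_nonneg_right this (Real.exp_pos _).le
  _ = Real.exp (-1) * k := mul_comm _ _

lemma tail_bound (l : ℝ) (hl : 0 < l) (t : ℕ) (hlt : l * Real.exp 1 ^ 2 ≤ t)
    (x : ℝ) (hx : |x| ≤ l) :
    |Real.exp x - ∑ j ∈ Finset.range (t + 1), x ^ j / Nat.factorial j| ≤ Real.exp (-(t:ℝ)) := by
  have hs : HasSum (fun j : ℕ => x ^ j / Nat.factorial j) (Real.exp x) := by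
    rw [Real.exp_eq_exp_ℝ]
    exact NormedSpace.expSeries_div_hasSum_exp (𝔸 := ℝ) x
  have hsum := hs.summable
  have heq : Real.exp x - ∑ j ∈ Finset.range (t + 1), x ^ j / Nat.factorial j
      = ∑' i : ℕ, x ^ (i + (t+1)) / Nat.factorial (i + (t+1)) := by
    have := (Summable.sum_add_tsum_nat_add (t+1) hsum).symm
    rw [hs.tsum_eq] at this
    linarith [this]
  rw [heq]
  have hr : Real.exp (-1) < 1 := Real.exp_lt_one_iff.mpr (by norm_num)
  have hr0 : (0:ℝ) ≤ Real.exp (-1) := (Real.exp_pos _).le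
  have hgs : Summable (fun i : ℕ => Real.exp (-1) ^ (i + (t+1))) := by
    apply Summable.comp_injective (summable_geometric_of_lt_one hr0 hr)
    exact fun a b h => by omega
  have hb : ∀ i : ℕ, |x ^ (i + (t+1)) / Nat.factorial (i + (t+1))| ≤ Real.exp (-1) ^ (i + (t+1)) := by
    intro i
    have : |x ^ (i + (t+1)) / Nat.factorial (i + (t+1))|
        = |x| ^ (i + (t+1)) / Nat.factorial (i + (t+1)) := by
      rw [abs_div, abs_pow, Nat.abs_cast]
    rw [this]
    refine le_trans ?_ (term_bound l hl t hlt (i + (t+1)) (by omega))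
    gcongr
  have habss : Summable (fun i : ℕ => |x ^ (i + (t+1)) / Nat.factorial (i + (t+1))|) :=
    hgs.of_nonneg_of_le (fun i => abs_nonneg _) hb
  calc |∑' i : ℕ, x ^ (i + (t+1)) / Nat.factorial (i + (t+1))|
      ≤ ∑' i : ℕ, Real.exp (-1) ^ (i + (t+1)) := by
        refine le_trans ?_ (Summable.tsum_le_tsum hb habss hgs)
        have := norm_tsum_le_tsum_norm (f := fun i : ℕ => x ^ (i + (t+1)) / Nat.factorial (i + (t+1))) ?_
        · simpa only [Real.norm_eq_abs] using this
        · simpa only [Real.norm_eq_abs] using habss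
  _ = Real.exp (-1) ^ (t+1) * (1 - Real.exp (-1))⁻¹ := by
        have : ∀ i : ℕ, Real.exp (-1) ^ (i + (t+1)) = Real.exp (-1) ^ (t+1) * Real.exp (-1) ^ i :=
          fun i => by rw [pow_add]; ring
        simp_rw [this]
        rw [tsum_mul_left, tsum_geometric_of_lt_one hr0 hr]
  _ ≤ Real.exp (-(t:ℝ)) := by
        have he : (2:ℝ) < Real.exp 1 := by
          have := Real.exp_one_gt_d9; linarith
        have h1 : Real.exp (-1) ^ (t+1) = Real.exp (-(t:ℝ)) * Real.exp (-1) := by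
          rw [← Real.exp_nat_mul, ← Real.exp_add]; push_cast; ring_nf
        rw [h1]
        have h2 : (1 - Real.exp (-1))⁻¹ ≤ Real.exp 1 := by
          rw [inv_le_comm₀ (by rw [sub_pos]; exact Real.exp_lt_one_iff.mpr (by norm_num)) (Real.exp_pos 1)]
          rw [Real.exp_neg, le_sub_iff_add_le]
          have hEinv : (Real.exp 1)⁻¹ ≤ 1/2 := by
            rw [inv_le_comm₀ (Real.exp_pos 1) (by norm_num)]
            norm_num
            linarith
          linarith
        calc Real.exp (-(t:ℝ)) * Real.exp (-1) * (1 - Real.exp (-1))⁻¹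
            ≤ Real.exp (-(t:ℝ)) * Real.exp (-1) * Real.exp 1 := by
              apply mul_le_mul_of_nonneg_left h2 (by positivity)
        _ = Real.exp (-(t:ℝ)) := by rw [mul_assoc, ← Real.exp_add]; simp

/-- Truncated Chebyshev/Taylor approximation of the exponential: if `λ > 0`, `λe² ≤ t`,
and `p_j` are polynomials of degree `≤ n` with
`sup_{y ∈ [-1,1]} |y^j - p_j(y)| ≤ 2 e^{-n²/(2t)}` for all `j ≤ t`, then
`sup_{y ∈ [-1,1]} |e^{-λ(y+1)} - e^{-λ} ∑_{j=0}^t ((-λ)^j/j!) p_j(y)| ≤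
  2 e^{-n²/(2t)} + e^{-λ-t}`. -/
theorem exp_poly_approx_error (l : ℝ) (hl : 0 < l) (n t : ℕ) (hn : 1 ≤ n) (ht : 1 ≤ t)
    (hlt : l * Real.exp 1 ^ 2 ≤ t)
    (p : ℕ → Polynomial ℝ) (hdeg : ∀ j, (p j).natDegree ≤ n)
    (hp : ∀ j ≤ t, ∀ y ∈ Set.Icc (-1 : ℝ) 1,
      |y ^ j - (p j).eval y| ≤ 2 * Real.exp (-(n : ℝ) ^ 2 / (2 * t))) :
    ∀ y ∈ Set.Icc (-1 : ℝ) 1,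
      |Real.exp (-l * (y + 1)) -
          Real.exp (-l) * ∑ j ∈ Finset.range (t + 1), ((-l) ^ j / Nat.factorial j) * (p j).eval y| ≤
        2 * Real.exp (-(n : ℝ) ^ 2 / (2 * t)) + Real.exp (-l - t) := by
  intro y hy
  have hy1 : |y| ≤ 1 := abs_le.mpr ⟨hy.1, hy.2⟩
  set ε := 2 * Real.exp (-(n : ℝ) ^ 2 / (2 * t)) with hε
  have hε0 : 0 ≤ ε := by positivity
  have hx : |(-l) * y| ≤ l := by
    rw [abs_mul, abs_neg, abs_of_pos hl]
    nlinarith [abs_nonneg y]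
  have htail := tail_bound l hl t hlt ((-l) * y) hx
  have hsplit : Real.exp (-l * (y + 1)) -
      Real.exp (-l) * ∑ j ∈ Finset.range (t + 1), ((-l) ^ j / Nat.factorial j) * (p j).eval y
    = Real.exp (-l) *
        (Real.exp ((-l) * y) - ∑ j ∈ Finset.range (t + 1), ((-l) * y) ^ j / Nat.factorial j)
      + Real.exp (-l) * ∑ j ∈ Finset.range (t + 1),
          ((-l) ^ j / Nat.factorial j) * (y ^ j - (p j).eval y) := by
    have h1 : Real.exp (-l * (y + 1)) = Real.exp (-l) * Real.exp ((-l) * y) := by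
      rw [← Real.exp_add]; ring_nf
    have h2 : ∑ j ∈ Finset.range (t + 1), ((-l) * y) ^ j / Nat.factorial j
        = ∑ j ∈ Finset.range (t + 1), ((-l) ^ j / Nat.factorial j) * y ^ j := by
      refine Finset.sum_congr rfl fun j _ => ?_
      rw [mul_pow]; ring
    simp only [mul_sub]
    rw [h1, h2, Finset.sum_sub_distrib]
    ring
  rw [hsplit]
  refine (abs_add_le _ _).trans ?_
  have hA : |Real.exp (-l) *
      (Real.exp ((-l) * y) - ∑ j ∈ Finset.range (t + 1), ((-l) * y) ^ j / Nat.factorial j)|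
      ≤ Real.exp (-l - t) := by
    rw [abs_mul, abs_of_pos (Real.exp_pos _)]
    have : Real.exp (-l - t) = Real.exp (-l) * Real.exp (-(t : ℝ)) := by
      rw [← Real.exp_add]; ring_nf
    rw [this]
    exact mul_le_mul_of_nonneg_left htail (Real.exp_pos _).le
  have hB : |Real.exp (-l) * ∑ j ∈ Finset.range (t + 1),
      ((-l) ^ j / Nat.factorial j) * (y ^ j - (p j).eval y)| ≤ ε := by
    rw [abs_mul, abs_of_pos (Real.exp_pos _)]
    have hin : |∑ j ∈ Finset.range (t + 1),
        ((-l) ^ j / Nat.factorial j) * (y ^ j - (p j).eval y)| ≤ Real.exp l * ε := by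
      refine (Finset.abs_sum_le_sum_abs _ _).trans ?_
      have hterm : ∀ j ∈ Finset.range (t + 1),
          |((-l) ^ j / Nat.factorial j) * (y ^ j - (p j).eval y)|
            ≤ (l ^ j / Nat.factorial j) * ε := by
        intro j hj
        rw [abs_mul, abs_div, abs_pow, abs_neg, abs_of_pos hl, Nat.abs_cast]
        refine mul_le_mul_of_nonneg_left ?_ (by positivity)
        exact hp j (Finset.mem_range_succ_iff.mp hj) y hy
      refine (Finset.sum_le_sum hterm).trans ?_
      rw [← Finset.sum_mul]
      exact mul_le_mul_of_nonneg_right (Real.sum_le_exp_of_nonneg hl.le (t + 1)) hε0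
    calc Real.exp (-l) * |∑ j ∈ Finset.range (t + 1),
          ((-l) ^ j / Nat.factorial j) * (y ^ j - (p j).eval y)|
        ≤ Real.exp (-l) * (Real.exp l * ε) :=
          mul_le_mul_of_nonneg_left hin (Real.exp_pos _).le
      _ = ε := by rw [← mul_assoc, ← Real.exp_add]; simp
  linarith
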